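/- Shuffle relation for iterated simplex integrals (Proposition 1.2): Let k = (k_1,…,k_p) and l = (l_1,…,l_q) be tuples of positive integers with k_1 ≥ 2 and l_1 ≥ 2, and set n = k_1+…+k_p, m = l_1+…+l_q. Then (∫_{Δ_n} ω_{w(k)})·(∫_{Δ_m} ω_{w(l)}) = Σ_{w ∈ sh(w(k), w(l))} ∫_{Δ_{n+m}} ω_w, where the sum runs over the multiset sh(w(k), w(l)) of shuffles of the two words; in particular ζ(k)·ζ(l) = Σ_{w ∈ sh(w(k),w(l))} ∫_{Δ_{n+m}} ω_w. -/

import Mathlib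

open MeasureTheory

/-- The multiple zeta value `ζ(k₁,…,k_p) = ∑_{n₁ > … > n_p > 0} 1/(n₁^{k₁} ⋯ n_p^{k_p})`. -/
noncomputable def zeta (k : List ℕ) : ℝ :=
  ∑' n : {f : Fin k.length → ℕ // StrictAnti f ∧ ∀ i, 0 < f i},
    ∏ i : Fin k.length, (1 : ℝ) / (n.1 i : ℝ) ^ (k.get i)

/-- The multiset `sh(u,v)` of individual terms of the shuffle product `u ⧢ v`. -/
def shuffles {α : Type*} : List α → List α → Multiset (List α)
  | [], v => {v}
  | u, [] => {u}
  | a :: u, b :: v =>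
      (shuffles u (b :: v)).map (a :: ·) + (shuffles (a :: u) v).map (b :: ·)
termination_by u v => u.length + v.length
decreasing_by all_goals simp +arith +decide

/-- The word `w(k) = (1, 0^{k_p−1}, 1, 0^{k_{p−1}−1}, …, 1, 0^{k_1−1})` in `{0,1}`
(`true` standing for `1` and `false` for `0`) attached to the tuple `k = (k₁,…,k_p)`. -/
def word (k : List ℕ) : List Bool :=
  (k.reverse.map (fun a => true :: List.replicate (a - 1) false)).flatten

/-- `h 1 t = 1/(1−t)` and `h 0 t = 1/t`. -/
noncomputable def h (b : Bool) (t : ℝ) : ℝ := if b then 1 / (1 - t) else 1 / t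

/-- The open simplex `Δ_N = {0 < t₁ < … < t_N < 1}`. -/
def simplex (N : ℕ) : Set (Fin N → ℝ) :=
  {t | StrictMono t ∧ ∀ i, t i ∈ Set.Ioo (0 : ℝ) 1}

/-- `∫_{Δ_N} ω_w`, the Lebesgue integral of `H_w(t) = ∏ᵢ h_{wᵢ}(tᵢ)` over the open
simplex of dimension the length of the word `w`. -/
noncomputable def simplexIntegral (w : List Bool) : ℝ :=
  ∫ t in simplex w.length, ∏ i : Fin w.length, h (w.get i) (t i)

open ENNReal Set

noncomputable def eh (b : Bool) (t : ℝ) : ℝ≥0∞ := ENNReal.ofReal (h b t)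

lemma measurable_h (b : Bool) : Measurable (h b) := by
  cases b <;> unfold h <;> simp only [if_true, if_false, one_div, Bool.false_eq_true]
  · exact Measurable.inv measurable_id
  · exact Measurable.inv (measurable_const.sub measurable_id)

lemma measurable_eh (b : Bool) : Measurable (eh b) :=
  ENNReal.measurable_ofReal.comp (measurable_h b)

noncomputable def A : List Bool → ℝ → ℝ≥0∞
  | [] => fun _ => 1
  | b :: r => fun y => ∫⁻ t in Set.Ioo 0 y, eh b t * A r t

@[simp] lemma A_nil (y : ℝ) : A [] y = 1 := by simp [A]

lemma A_cons (b : Bool) (r : List Bool) (y : ℝ) :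
    A (b :: r) y = ∫⁻ t in Set.Ioo 0 y, eh b t * A r t := by simp [A]

lemma monotone_A (r : List Bool) : Monotone (A r) := by
  cases r with
  | nil => exact monotone_const
  | cons b r =>
    intro y y' hy
    rw [A_cons, A_cons]
    exact lintegral_mono' (Measure.restrict_mono (Set.Ioo_subset_Ioo le_rfl hy) le_rfl) le_rfl

lemma measurable_A (r : List Bool) : Measurable (A r) := (monotone_A r).measurable



def region (N : ℕ) (y : ℝ) : Set (Fin N → ℝ) :=
  {t | StrictMono t ∧ ∀ i, t i ∈ Set.Ioo 0 y}

lemma measurableSet_strictMono (N : ℕ) :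
    MeasurableSet {t : Fin N → ℝ | StrictMono t} := by
  have : {t : Fin N → ℝ | StrictMono t}
      = ⋂ (i : Fin N) (j : Fin N), {t | i < j → t i < t j} := by
    ext t
    simp only [Set.mem_setOf_eq, Set.mem_iInter]
    exact ⟨fun h i j hij => h hij, fun h a b hab => h a b hab⟩
  rw [this]
  refine MeasurableSet.iInter fun i => MeasurableSet.iInter fun j => ?_
  by_cases hij : i < j
  · simp only [hij, true_implies]
    exact measurableSet_lt (measurable_pi_apply i) (measurable_pi_apply j)
  · simp only [hij, false_implies, Set.setOf_true]
    exact MeasurableSet.univ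

lemma measurableSet_region (N : ℕ) (y : ℝ) : MeasurableSet (region N y) := by
  have : region N y = {t : Fin N → ℝ | StrictMono t} ∩ ⋂ i, (fun t => t i) ⁻¹' (Set.Ioo 0 y) := by
    ext t; simp [region, Set.mem_iInter]
  rw [this]
  exact (measurableSet_strictMono N).inter
    (MeasurableSet.iInter fun i => measurableSet_Ioo.preimage (measurable_pi_apply i))

lemma region_succ_iff {N : ℕ} {y : ℝ} (t : Fin (N + 1) → ℝ) :
    t ∈ region (N + 1) y ↔
      t (Fin.last N) ∈ Set.Ioo 0 y ∧ (fun j => t (Fin.castSucc j)) ∈ region N (t (Fin.last N)) := by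
  constructor
  · rintro ⟨hm, hb⟩
    refine ⟨hb _, fun a b hab => hm (Fin.castSucc_lt_castSucc_iff.mpr hab), fun j =>
      ⟨(hb _).1, hm (Fin.castSucc_lt_last j)⟩⟩
  · rintro ⟨hy, hm, hb⟩
    constructor
    · rw [Fin.strictMono_iff_lt_succ]
      intro i
      rcases Fin.eq_castSucc_or_eq_last i.succ with ⟨j, hj⟩ | hj
      · rw [hj]
        have : i < j := by
          have := Fin.castSucc_lt_succ (i := i)
          rw [hj] at this
          exact Fin.castSucc_lt_castSucc_iff.mp this
        exact hm this
      · rw [hj]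
        exact (hb i).2
    · intro i
      rcases Fin.eq_castSucc_or_eq_last i with ⟨j, hj⟩ | hj
      · subst hj
        exact ⟨(hb j).1, (hb j).2.trans hy.2⟩
      · subst hj; exact hy

lemma peel : ∀ (N : ℕ) (c : Fin N → Bool) (y : ℝ),
    ∫⁻ t in region N y, ∏ i, eh (c i) (t i) = A (List.ofFn c).reverse y := by
  intro N
  induction N with
  | zero =>
    intro c y
    have h1 : region 0 y = Set.univ := by
      ext t
      simp [region, Subsingleton.strictMono t]
    simp only [h1, A_nil]
    rw [Measure.restrict_univ]
    simp [lintegral_const, Finset.univ_eq_empty, Finset.prod_empty, volume_pi, Measure.pi_univ]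
  | succ N IH =>
    intro c y
    set e := MeasurableEquiv.piFinSuccAbove (fun _ : Fin (N + 1) => ℝ) (Fin.last N) with he
    set C : Set (ℝ × (Fin N → ℝ)) :=
      {q | q.1 ∈ Set.Ioo 0 y ∧ q.2 ∈ region N q.1} with hC
    have hCmeas : MeasurableSet C := by
      have : C = (Prod.fst ⁻¹' Set.Ioo (0:ℝ) y) ∩ ((Prod.snd ⁻¹' {t : Fin N → ℝ | StrictMono t})
          ∩ ⋂ j : Fin N, {q : ℝ × (Fin N → ℝ) | q.2 j ∈ Set.Ioo 0 q.1}) := by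
        ext q
        simp only [hC, region, Set.mem_iInter, Set.mem_inter_iff, Set.mem_preimage,
          Set.mem_setOf_eq, and_assoc]
        try tauto
      rw [this]
      refine (measurableSet_Ioo.preimage measurable_fst).inter
        (((measurableSet_strictMono N).preimage measurable_snd).inter
          (MeasurableSet.iInter fun j => ?_))
      have : {q : ℝ × (Fin N → ℝ) | q.2 j ∈ Set.Ioo 0 q.1}
          = {q : ℝ × (Fin N → ℝ) | 0 < q.2 j} ∩ {q | q.2 j < q.1} := by
        ext q; simp [Set.mem_Ioo, and_comm]
      rw [this]
      exact (measurableSet_lt measurable_const (measurable_snd.eval)).inter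
        (measurableSet_lt (measurable_snd.eval) measurable_fst)
    set F : ℝ × (Fin N → ℝ) → ℝ≥0∞ :=
      C.indicator (fun q => eh (c (Fin.last N)) q.1 * ∏ j : Fin N, eh (c (Fin.castSucc j)) (q.2 j))
      with hF
    have hFmeas : Measurable F := by
      refine Measurable.indicator ?_ hCmeas
      exact ((measurable_eh _).comp measurable_fst).mul
        (Finset.measurable_prod _ fun j _ =>
          (measurable_eh _).comp ((measurable_pi_apply j).comp measurable_snd))
    have key : ∀ t : Fin (N + 1) → ℝ,
        (region (N + 1) y).indicator (fun t => ∏ i, eh (c i) (t i)) t = F (e t) := by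
      intro t
      have het : e t = (t (Fin.last N), fun j => t ((Fin.last N).succAbove j)) := rfl
      have hsucc : ∀ j : Fin N, (Fin.last N).succAbove j = Fin.castSucc j := by
        intro j; rw [Fin.succAbove_last]
      by_cases ht : t ∈ region (N + 1) y
      · rw [Set.indicator_of_mem ht]
        have htC : e t ∈ C := by
          rw [het]
          have := (region_succ_iff t).mp ht
          refine ⟨this.1, ?_⟩
          simp only [hsucc]
          exact this.2
        rw [hF, Set.indicator_of_mem htC, het]
        simp only [hsucc]
        rw [Fin.prod_univ_castSucc (f := fun i => eh (c i) (t i))]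
        ring
      · rw [Set.indicator_of_notMem ht]
        have htC : e t ∉ C := by
          intro hmem
          apply ht
          rw [region_succ_iff]
          rw [het] at hmem
          refine ⟨hmem.1, ?_⟩
          have := hmem.2
          simp only [hsucc] at this
          exact this
        rw [hF, Set.indicator_of_notMem htC]
    calc ∫⁻ t in region (N + 1) y, ∏ i, eh (c i) (t i)
        = ∫⁻ t, (region (N + 1) y).indicator (fun t => ∏ i, eh (c i) (t i)) t := by
          rw [lintegral_indicator (measurableSet_region _ _)]
      _ = ∫⁻ t, F (e t) := by
          exact lintegral_congr key
      _ = ∫⁻ p, F p ∂((volume : Measure ℝ).prod (volume : Measure (Fin N → ℝ))) := by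
          exact (volume_preserving_piFinSuccAbove (fun _ : Fin (N+1) => ℝ)
            (Fin.last N)).lintegral_comp hFmeas
      _ = ∫⁻ x, ∫⁻ s, F (x, s) := by
          exact lintegral_prod F hFmeas.aemeasurable
      _ = ∫⁻ x, (Set.Ioo (0:ℝ) y).indicator
            (fun x => eh (c (Fin.last N)) x * A (List.ofFn fun j => c (Fin.castSucc j)).reverse x) x := by
          refine lintegral_congr fun x => ?_
          by_cases hx : x ∈ Set.Ioo (0:ℝ) y
          · rw [Set.indicator_of_mem hx]
            have : ∀ s : Fin N → ℝ, F (x, s) = (region N x).indicator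
                (fun s => eh (c (Fin.last N)) x * ∏ j : Fin N, eh (c (Fin.castSucc j)) (s j)) s := by
              intro s
              by_cases hs : s ∈ region N x
              · rw [Set.indicator_of_mem hs, hF, Set.indicator_of_mem (by exact ⟨hx, hs⟩)]
              · rw [Set.indicator_of_notMem hs, hF, Set.indicator_of_notMem
                  (by intro hq; exact hs hq.2)]
            simp_rw [this]
            rw [lintegral_indicator (measurableSet_region _ _),
              lintegral_const_mul _ (show Measurable fun s : Fin N → ℝ =>
                ∏ j : Fin N, eh (c (Fin.castSucc j)) (s j) from
                Finset.measurable_prod _ fun j _ => (measurable_eh _).comp (measurable_pi_apply j)),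
              IH]
          · rw [Set.indicator_of_notMem hx]
            have : ∀ s : Fin N → ℝ, F (x, s) = 0 := by
              intro s
              rw [hF, Set.indicator_of_notMem (by intro hq; exact hx hq.1)]
            simp [this]
      _ = ∫⁻ x in Set.Ioo 0 y,
            eh (c (Fin.last N)) x * A (List.ofFn fun j => c (Fin.castSucc j)).reverse x := by
          rw [lintegral_indicator measurableSet_Ioo]
      _ = A (List.ofFn c).reverse y := by
          rw [List.ofFn_succ' c]
          rw [List.concat_eq_append, List.reverse_append]
          simp only [List.reverse_cons, List.reverse_nil, List.nil_append, List.singleton_append]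
          rw [A_cons]


lemma step_sum (b : Bool) (y : ℝ) (s : Multiset (List Bool)) :
    ∫⁻ t in Set.Ioo 0 y, eh b t * (s.map (fun w => A w t)).sum
      = (s.map (fun w => ∫⁻ t in Set.Ioo 0 y, eh b t * A w t)).sum := by
  induction s using Multiset.induction with
  | empty => simp
  | cons w s ih =>
    simp only [Multiset.map_cons, Multiset.sum_cons, mul_add]
    rw [lintegral_add_left (f := fun t => eh b t * A w t) ((measurable_eh b).mul (measurable_A w)), ih]

lemma shuf : ∀ (u v : List Bool) (y : ℝ),
    A u y * A v y = ((shuffles u v).map (fun w => A w y)).sum := by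
  have main : ∀ (n : ℕ) (u v : List Bool), u.length + v.length ≤ n → ∀ y,
      A u y * A v y = ((shuffles u v).map (fun w => A w y)).sum := by
    intro n
    induction n with
    | zero =>
      intro u v hn y
      have hu : u = [] := List.length_eq_zero_iff.mp (by omega)
      have hv : v = [] := List.length_eq_zero_iff.mp (by omega)
      subst hu; subst hv
      simp [shuffles, A_nil]
    | succ n IH =>
      intro u v hn y
      match u, v with
      | [], v => simp [shuffles, A_nil]
      | a :: u, [] => simp [shuffles, A_nil]
      | a :: u, b :: v =>
        set μ := (volume : Measure ℝ).restrict (Set.Ioo 0 y) with hμ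
        set f : ℝ → ℝ≥0∞ := fun t => eh a t * A u t with hf
        set g : ℝ → ℝ≥0∞ := fun r => eh b r * A v r with hg
        have hfm : Measurable f := (measurable_eh a).mul (measurable_A u)
        have hgm : Measurable g := (measurable_eh b).mul (measurable_A v)
        have hFm : Measurable (fun z : ℝ × ℝ => f z.1 * g z.2) :=
          (hfm.comp measurable_fst).mul (hgm.comp measurable_snd)
        have hgtm : MeasurableSet {z : ℝ × ℝ | z.2 < z.1} :=
          measurableSet_lt measurable_snd measurable_fst
        have hltm : MeasurableSet {z : ℝ × ℝ | z.1 < z.2} :=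
          measurableSet_lt measurable_fst measurable_snd
        have heqm : MeasurableSet {z : ℝ × ℝ | z.1 = z.2} :=
          measurableSet_eq_fun measurable_fst measurable_snd
        have diag0 : (μ.prod μ) {z : ℝ × ℝ | z.1 = z.2} = 0 := by
          rw [Measure.prod_apply heqm]
          have : ∀ x : ℝ, μ (Prod.mk x ⁻¹' {z : ℝ × ℝ | z.1 = z.2}) = 0 := by
            intro x
            have hpre : (Prod.mk x ⁻¹' {z : ℝ × ℝ | z.1 = z.2}) = {x} := by
              ext r; simp [eq_comm]
            rw [hpre]
            refine le_antisymm ?_ zero_le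
            calc μ {x} ≤ volume {x} := Measure.restrict_le_self _
              _ = 0 := Real.volume_singleton
          simp [this]
        -- the two halves
        have T1 : ∫⁻ z in {z : ℝ × ℝ | z.2 < z.1}, f z.1 * g z.2 ∂(μ.prod μ)
            = ∫⁻ t in Set.Ioo 0 y, eh a t * (A u t * A (b :: v) t) := by
          rw [← lintegral_indicator hgtm]
          have hindm : Measurable ({z : ℝ × ℝ | z.2 < z.1}.indicator
              (fun z => f z.1 * g z.2)) := hFm.indicator hgtm
          rw [lintegral_prod _ hindm.aemeasurable]
          have inner : ∀ t : ℝ, (∫⁻ r, {z : ℝ × ℝ | z.2 < z.1}.indicator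
              (fun z => f z.1 * g z.2) (t, r) ∂μ) = f t * ∫⁻ r in Set.Iio t, g r ∂μ := by
            intro t
            have : ∀ r : ℝ, {z : ℝ × ℝ | z.2 < z.1}.indicator (fun z => f z.1 * g z.2) (t, r)
                = (Set.Iio t).indicator (fun r => f t * g r) r := by
              intro r
              by_cases hr : r < t
              · rw [Set.indicator_of_mem (by exact hr), Set.indicator_of_mem (by exact hr)]
              · rw [Set.indicator_of_notMem (by exact hr), Set.indicator_of_notMem (by exact hr)]
            simp_rw [this]
            rw [lintegral_indicator measurableSet_Iio,
              lintegral_const_mul _ hgm]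
          simp_rw [inner]
          refine lintegral_congr_ae ?_
          filter_upwards [ae_restrict_mem measurableSet_Ioo] with t ht
          have hset : Set.Iio t ∩ Set.Ioo 0 y = Set.Ioo 0 t := by
            ext r
            simp only [Set.mem_inter_iff, Set.mem_Iio, Set.mem_Ioo]
            constructor
            · rintro ⟨h1, h2, h3⟩; exact ⟨h2, h1⟩
            · rintro ⟨h1, h2⟩; exact ⟨h2, h1, h2.trans ht.2⟩
          rw [hμ, Measure.restrict_restrict measurableSet_Iio, hset, ← A_cons, hf]
          ring
        have T2 : ∫⁻ z in {z : ℝ × ℝ | z.1 < z.2}, f z.1 * g z.2 ∂(μ.prod μ)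
            = ∫⁻ r in Set.Ioo 0 y, eh b r * (A (a :: u) r * A v r) := by
          rw [← lintegral_indicator hltm]
          have hindm : Measurable ({z : ℝ × ℝ | z.1 < z.2}.indicator
              (fun z => f z.1 * g z.2)) := hFm.indicator hltm
          rw [lintegral_prod_symm _ hindm.aemeasurable]
          have inner : ∀ r : ℝ, (∫⁻ t, {z : ℝ × ℝ | z.1 < z.2}.indicator
              (fun z => f z.1 * g z.2) (t, r) ∂μ) = g r * ∫⁻ t in Set.Iio r, f t ∂μ := by
            intro r
            have : ∀ t : ℝ, {z : ℝ × ℝ | z.1 < z.2}.indicator (fun z => f z.1 * g z.2) (t, r)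
                = (Set.Iio r).indicator (fun t => g r * f t) t := by
              intro t
              by_cases hr : t < r
              · rw [Set.indicator_of_mem (by exact hr), Set.indicator_of_mem (by exact hr)]
                ring
              · rw [Set.indicator_of_notMem (by exact hr), Set.indicator_of_notMem (by exact hr)]
            simp_rw [this]
            rw [lintegral_indicator measurableSet_Iio,
              lintegral_const_mul _ hfm]
          simp_rw [inner]
          refine lintegral_congr_ae ?_
          filter_upwards [ae_restrict_mem measurableSet_Ioo] with r hr
          have hset : Set.Iio r ∩ Set.Ioo 0 y = Set.Ioo 0 r := by
            ext t
            simp only [Set.mem_inter_iff, Set.mem_Iio, Set.mem_Ioo]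
            constructor
            · rintro ⟨h1, h2, h3⟩; exact ⟨h2, h1⟩
            · rintro ⟨h1, h2⟩; exact ⟨h2, h1, h2.trans hr.2⟩
          rw [hμ, Measure.restrict_restrict measurableSet_Iio, hset, ← A_cons, hg]
          ring
        have expand : A (a :: u) y * A (b :: v) y
            = ∫⁻ z, f z.1 * g z.2 ∂(μ.prod μ) := by
          rw [A_cons, A_cons, ← hμ, ← hf, ← hg, lintegral_prod_mul hfm.aemeasurable hgm.aemeasurable]
        have split : ∫⁻ z, f z.1 * g z.2 ∂(μ.prod μ)
            = (∫⁻ z in {z : ℝ × ℝ | z.2 < z.1}, f z.1 * g z.2 ∂(μ.prod μ))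
              + ∫⁻ z in {z : ℝ × ℝ | z.1 < z.2}, f z.1 * g z.2 ∂(μ.prod μ) := by
          rw [← lintegral_add_compl (fun z : ℝ × ℝ => f z.1 * g z.2) hgtm]
          congr 1
          have hcompl : {z : ℝ × ℝ | z.2 < z.1}ᶜ
              = {z : ℝ × ℝ | z.1 < z.2} ∪ {z : ℝ × ℝ | z.1 = z.2} := by
            ext z
            simp only [Set.mem_compl_iff, Set.mem_setOf_eq, Set.mem_union, not_lt]
            constructor
            · intro hz; rcases lt_or_eq_of_le hz with h | h
              · exact Or.inl h
              · exact Or.inr h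
            · rintro (hz | hz)
              · exact hz.le
              · exact hz.le
          rw [hcompl, lintegral_union heqm (by
            rintro s hs1 hs2 z hz
            have h1 := hs1 hz
            have h2 := hs2 hz
            exact absurd h2 (ne_of_lt h1))]
          rw [setLIntegral_measure_zero _ _ diag0, add_zero]
        -- IHs
        have IH1 : ∀ t : ℝ, A u t * A (b :: v) t
            = ((shuffles u (b :: v)).map (fun w => A w t)).sum := by
          intro t
          exact IH u (b :: v) (by simp at hn ⊢; omega) t
        have IH2 : ∀ r : ℝ, A (a :: u) r * A v r
            = ((shuffles (a :: u) v).map (fun w => A w r)).sum := by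
          intro r
          exact IH (a :: u) v (by simp at hn ⊢; omega) r
        calc A (a :: u) y * A (b :: v) y
            = (∫⁻ t in Set.Ioo 0 y, eh a t * (A u t * A (b :: v) t))
              + ∫⁻ r in Set.Ioo 0 y, eh b r * (A (a :: u) r * A v r) := by
              rw [expand, split, T1, T2]
          _ = ((shuffles u (b :: v)).map (fun w => A (a :: w) y)).sum
              + ((shuffles (a :: u) v).map (fun w => A (b :: w) y)).sum := by
              congr 1
              · simp_rw [IH1]
                rw [step_sum]
                exact congrArg Multiset.sum (Multiset.map_congr rfl fun w _ => (A_cons a w y).symm)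
              · simp_rw [IH2]
                rw [step_sum]
                exact congrArg Multiset.sum (Multiset.map_congr rfl fun w _ => (A_cons b w y).symm)
          _ = ((shuffles (a :: u) (b :: v)).map (fun w => A w y)).sum := by
              rw [show shuffles (a :: u) (b :: v)
                  = (shuffles u (b :: v)).map (a :: ·) + (shuffles (a :: u) v).map (b :: ·) from by
                rw [shuffles]]
              rw [Multiset.map_add, Multiset.sum_add, Multiset.map_map, Multiset.map_map]
              rfl
  intro u v y
  exact main (u.length + v.length) u v le_rfl y


noncomputable def Cr : List Bool → ℕ → ℝ≥0∞
  | [] => fun n => if n = 0 then 1 else 0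
  | true :: r => fun M => (∑ n ∈ Finset.range M, Cr r n) * (M : ℝ≥0∞)⁻¹
  | false :: r => fun n => Cr r n * (n : ℝ≥0∞)⁻¹

lemma Cr_nil (n : ℕ) : Cr [] n = if n = 0 then 1 else 0 := by simp [Cr]
lemma Cr_true (r : List Bool) (M : ℕ) :
    Cr (true :: r) M = (∑ n ∈ Finset.range M, Cr r n) * (M : ℝ≥0∞)⁻¹ := by simp [Cr]
lemma Cr_false (r : List Bool) (n : ℕ) :
    Cr (false :: r) n = Cr r n * (n : ℝ≥0∞)⁻¹ := by simp [Cr]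

lemma Cr_zero : ∀ r : List Bool, r.getLast? = some true → Cr r 0 = 0 := by
  intro r
  induction r with
  | nil => intro hr; simp at hr
  | cons b r IH =>
    intro hr
    cases b
    · -- b = false
      match r, hr with
      | [], hr => simp at hr
      | b' :: r', hr =>
        rw [List.getLast?_cons_cons] at hr
        rw [Cr_false, IH hr, zero_mul]
    · rw [Cr_true]
      simp

-- tsum reindex helper
lemma tsum_shift (f : ℕ → ℝ≥0∞) (n : ℕ) :
    ∑' m : ℕ, f (m + n + 1) = ∑' M : ℕ, (if n < M then f M else 0) := by
  set g : ℕ → ℝ≥0∞ := fun M => if n < M then f M else 0 with hg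
  have hinj : Function.Injective (fun m : ℕ => m + n + 1) := by
    intro a b hab
    simp only [] at hab
    omega
  have hsupp : Function.support g ⊆ Set.range (fun m : ℕ => m + n + 1) := by
    intro M hM
    have : n < M := by
      by_contra hn
      simp [hg, hn] at hM
    exact ⟨M - n - 1, by simp only []; omega⟩
  have := hinj.tsum_eq hsupp
  rw [← this]
  refine tsum_congr fun m => ?_
  simp only [hg]
  rw [if_pos (by omega)]

lemma range_sum_eq (c : ℕ → ℝ≥0∞) (M : ℕ) :
    ∑ n ∈ Finset.range M, c n = ∑' n : ℕ, (if n < M then c n else 0) := by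
  rw [tsum_eq_sum (s := Finset.range M) (by intro n hn; rw [if_neg (by simpa using hn)])]
  exact Finset.sum_congr rfl fun n hn => by rw [if_pos (by simpa using hn)]

lemma lint_pow (y : ℝ) (hy : 0 ≤ y) (K : ℕ) :
    ∫⁻ t in Set.Ioo 0 y, ENNReal.ofReal (t ^ K)
      = ENNReal.ofReal (y ^ (K + 1)) * ((K + 1 : ℕ) : ℝ≥0∞)⁻¹ := by
  have hint : IntegrableOn (fun t : ℝ => t ^ K) (Set.Ioo 0 y) := by
    have : IntervalIntegrable (fun t : ℝ => t ^ K) volume 0 y := intervalIntegral.intervalIntegrable_pow K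
    rw [intervalIntegrable_iff_integrableOn_Ioo_of_le hy] at this
    exact this
  rw [← ofReal_integral_eq_lintegral_ofReal hint]
  · have : ∫ t in Set.Ioo 0 y, t ^ K = y ^ (K + 1) / (K + 1) := by
      rw [← integral_Ioc_eq_integral_Ioo, ← intervalIntegral.integral_of_le hy,
        integral_pow]
      simp
    rw [this, ENNReal.ofReal_div_of_pos (by positivity)]
    rw [div_eq_mul_inv]
    congr 1
    rw [← ENNReal.ofReal_natCast]
    congr 1
    push_cast
    ring
  · filter_upwards [ae_restrict_mem measurableSet_Ioo] with t ht
    exact pow_nonneg ht.1.le K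

lemma lint_false (y : ℝ) (hy : 0 ≤ y) (n : ℕ) (hn : 1 ≤ n) :
    ∫⁻ t in Set.Ioo 0 y, eh false t * (ENNReal.ofReal t) ^ n
      = ENNReal.ofReal (y ^ n) * (n : ℝ≥0∞)⁻¹ := by
  have hcongr : ∀ t ∈ Set.Ioo (0:ℝ) y, eh false t * (ENNReal.ofReal t) ^ n
      = ENNReal.ofReal (t ^ (n - 1)) := by
    intro t ht
    rw [eh, h]
    simp only [Bool.false_eq_true, if_false]
    rw [← ENNReal.ofReal_pow ht.1.le, ← ENNReal.ofReal_mul (one_div_nonneg.mpr ht.1.le)]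
    congr 1
    have htne : t ≠ 0 := ne_of_gt ht.1
    have hpow : t ^ n = t * t ^ (n - 1) := by
      rw [← pow_succ']
      congr 1
      omega
    rw [hpow, one_div]
    field_simp
  have hn1 : n - 1 + 1 = n := by omega
  rw [setLIntegral_congr_fun measurableSet_Ioo
    (fun t ht => hcongr t ht), lint_pow y hy, hn1]

lemma lint_true (y : ℝ) (hy : 0 ≤ y) (hy1 : y ≤ 1) (n : ℕ) :
    ∫⁻ t in Set.Ioo 0 y, eh true t * (ENNReal.ofReal t) ^ n
      = ∑' M : ℕ, (if n < M then ENNReal.ofReal (y ^ M) * (M : ℝ≥0∞)⁻¹ else 0) := by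
  have hcongr : ∀ t ∈ Set.Ioo (0:ℝ) y, eh true t * (ENNReal.ofReal t) ^ n
      = ∑' m : ℕ, ENNReal.ofReal (t ^ (m + n)) := by
    intro t ht
    have ht0 : (0:ℝ) ≤ t := ht.1.le
    have ht1 : t < 1 := lt_of_lt_of_le ht.2 hy1
    rw [eh, h, if_pos rfl, one_div]
    have hgeom : (1 - t)⁻¹ = ∑' m : ℕ, t ^ m := (tsum_geometric_of_lt_one ht0 ht1).symm
    rw [hgeom, ENNReal.ofReal_tsum_of_nonneg (fun m => pow_nonneg ht0 m)
      (summable_geometric_of_lt_one ht0 ht1)]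
    rw [← ENNReal.tsum_mul_right]
    refine tsum_congr fun m => ?_
    rw [← ENNReal.ofReal_pow ht0, ← ENNReal.ofReal_mul (by positivity), ← pow_add]
  rw [setLIntegral_congr_fun measurableSet_Ioo (fun t ht => hcongr t ht)]
  rw [lintegral_tsum (fun m => ((measurable_id'.pow_const (m + n)).ennreal_ofReal).aemeasurable)]
  have : ∀ m : ℕ, ∫⁻ t in Set.Ioo 0 y, ENNReal.ofReal (t ^ (m + n))
      = ENNReal.ofReal (y ^ (m + n + 1)) * ((m + n + 1 : ℕ) : ℝ≥0∞)⁻¹ := fun m => lint_pow y hy _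
  simp_rw [this]
  exact tsum_shift (fun M => ENNReal.ofReal (y ^ M) * (M : ℝ≥0∞)⁻¹) n

lemma series : ∀ (r : List Bool), (r = [] ∨ r.getLast? = some true) →
    ∀ y : ℝ, 0 ≤ y → y ≤ 1 →
    A r y = ∑' n : ℕ, Cr r n * (ENNReal.ofReal y) ^ n := by
  intro r
  induction r with
  | nil =>
    intro _ y hy0 hy1
    rw [A_nil, eq_comm]
    rw [tsum_eq_single 0 (fun n hn => by rw [Cr_nil, if_neg hn, zero_mul])]
    rw [Cr_nil, if_pos rfl, pow_zero, mul_one]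
  | cons b r IH =>
    intro hadm y hy0 hy1
    have hadm' : b :: r ≠ [] := by simp
    have hlast : (b :: r).getLast? = some true := hadm.resolve_left hadm'
    have hr : r = [] ∨ r.getLast? = some true := by
      rcases List.eq_nil_or_concat r with rfl | ⟨r', a, rfl⟩
      · exact Or.inl rfl
      · right
        match r', hlast with
        | r', hlast =>
          rw [List.concat_eq_append] at hlast ⊢
          rcases r' with _ | ⟨c, r''⟩
          · simpa using hlast
          · rw [List.cons_append, List.getLast?_cons_cons] at hlast
            exact hlast
    rw [A_cons]
    have hIH : ∀ t ∈ Set.Ioo (0:ℝ) y, eh b t * A r t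
        = ∑' n : ℕ, Cr r n * (eh b t * (ENNReal.ofReal t) ^ n) := by
      intro t ht
      rw [IH hr t ht.1.le (le_of_lt (lt_of_lt_of_le ht.2 hy1))]
      rw [← ENNReal.tsum_mul_left]
      exact tsum_congr fun n => by ring
    rw [setLIntegral_congr_fun measurableSet_Ioo (fun t ht => hIH t ht)]
    rw [lintegral_tsum (f := fun n x => Cr r n * (eh b x * ENNReal.ofReal x ^ n)) (fun n => ((measurable_const.mul ((measurable_eh b).mul
      ((measurable_id'.ennreal_ofReal).pow_const n)))).aemeasurable)]
    have pull : ∀ n : ℕ, ∫⁻ t in Set.Ioo 0 y, Cr r n * (eh b t * (ENNReal.ofReal t) ^ n)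
        = Cr r n * ∫⁻ t in Set.Ioo 0 y, eh b t * (ENNReal.ofReal t) ^ n := fun n =>
      lintegral_const_mul _ ((measurable_eh b).mul
        ((measurable_id'.ennreal_ofReal).pow_const n))
    simp_rw [pull]
    cases b
    · -- b = false
      have hrne : r ≠ [] := by
        rintro rfl
        simp at hlast
      have hc0 : Cr r 0 = 0 := Cr_zero r (hr.resolve_left hrne)
      refine tsum_congr fun n => ?_
      cases n with
      | zero =>
        rw [hc0, Cr_false, hc0]
        simp
      | succ m =>
        rw [lint_false y hy0 (m + 1) (by omega), Cr_false]
        rw [ENNReal.ofReal_pow hy0]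
        ring
    · -- b = true
      have key : ∀ n : ℕ, ∫⁻ t in Set.Ioo 0 y, eh true t * (ENNReal.ofReal t) ^ n
          = ∑' M : ℕ, (if n < M then ENNReal.ofReal (y ^ M) * (M : ℝ≥0∞)⁻¹ else 0) :=
        fun n => lint_true y hy0 hy1 n
      simp_rw [key]
      calc ∑' n : ℕ, Cr r n * ∑' M : ℕ, (if n < M then ENNReal.ofReal (y ^ M) * (M:ℝ≥0∞)⁻¹ else 0)
          = ∑' n : ℕ, ∑' M : ℕ, (if n < M then Cr r n else 0)
              * (ENNReal.ofReal (y ^ M) * (M:ℝ≥0∞)⁻¹) := by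
            refine tsum_congr fun n => ?_
            rw [← ENNReal.tsum_mul_left]
            refine tsum_congr fun M => ?_
            by_cases hnM : n < M
            · rw [if_pos hnM, if_pos hnM]
            · rw [if_neg hnM, if_neg hnM, mul_zero, zero_mul]
        _ = ∑' M : ℕ, ∑' n : ℕ, (if n < M then Cr r n else 0)
              * (ENNReal.ofReal (y ^ M) * (M:ℝ≥0∞)⁻¹) := ENNReal.tsum_comm
        _ = ∑' M : ℕ, Cr (true :: r) M * (ENNReal.ofReal y) ^ M := by
            refine tsum_congr fun M => ?_
            rw [ENNReal.tsum_mul_right, ← range_sum_eq, Cr_true, ENNReal.ofReal_pow hy0]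
            ring

lemma ennreal_inv_nat (m : ℕ) (hm : 1 ≤ m) :
    ((m : ℕ) : ℝ≥0∞)⁻¹ = ENNReal.ofReal ((m : ℝ))⁻¹ := by
  have hm' : (0:ℝ) < (m:ℝ) := by exact_mod_cast hm
  rw [ENNReal.ofReal_inv_of_pos hm', ENNReal.ofReal_natCast]

lemma arith_step (m : ℕ) (hm : 1 ≤ m) :
    ((m + 1 : ℕ) : ℝ≥0∞)⁻¹ * ((m + 1 : ℕ) : ℝ≥0∞)⁻¹ + ((m + 1 : ℕ) : ℝ≥0∞)⁻¹
      ≤ ((m : ℕ) : ℝ≥0∞)⁻¹ := by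
  have hm' : (1:ℝ) ≤ (m:ℝ) := by exact_mod_cast hm
  have h0 : (0:ℝ) < (m:ℝ) := by linarith
  have h1 : (0:ℝ) < ((m + 1 : ℕ):ℝ) := by push_cast; linarith
  rw [ennreal_inv_nat (m+1) (by omega), ennreal_inv_nat m hm,
    ← ENNReal.ofReal_mul (by positivity), ← ENNReal.ofReal_add (by positivity) (by positivity)]
  apply ENNReal.ofReal_le_ofReal
  have key : (((m:ℝ) + 1))⁻¹ * (((m:ℝ) + 1))⁻¹ + (((m:ℝ) + 1))⁻¹ ≤ ((m:ℝ))⁻¹ := by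
    have e1 : ((m:ℝ) + 1)⁻¹ = 1 / ((m:ℝ) + 1) := inv_eq_one_div _
    have e2 : ((m:ℝ))⁻¹ = 1 / (m:ℝ) := inv_eq_one_div _
    rw [e1, e2, div_mul_div_comm, div_add_div _ _ (by positivity) (by positivity),
      div_le_div_iff₀ (by positivity) h0]
    nlinarith
  convert key using 3 <;> push_cast <;> ring

lemma key2 (n : ℕ) (hn : 1 ≤ n) :
    ∑' M : ℕ, (if n < M then ((M:ℕ):ℝ≥0∞)⁻¹ * ((M:ℕ):ℝ≥0∞)⁻¹ else 0) ≤ ((n:ℕ):ℝ≥0∞)⁻¹ := by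
  rw [ENNReal.tsum_eq_iSup_nat]
  refine iSup_le fun K => ?_
  have SB : ∀ j : ℕ, (∑ M ∈ Finset.range (n + 1 + j),
      if n < M then ((M:ℕ):ℝ≥0∞)⁻¹ * ((M:ℕ):ℝ≥0∞)⁻¹ else 0) + ((n + j : ℕ) : ℝ≥0∞)⁻¹
      ≤ ((n:ℕ):ℝ≥0∞)⁻¹ := by
    intro j
    induction j with
    | zero =>
      have hz : (∑ M ∈ Finset.range (n + 1 + 0),
          if n < M then ((M:ℕ):ℝ≥0∞)⁻¹ * ((M:ℕ):ℝ≥0∞)⁻¹ else 0) = 0 := by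
        refine Finset.sum_eq_zero fun M hM => ?_
        rw [if_neg]
        simp only [Finset.mem_range] at hM
        omega
      rw [hz, zero_add]
      simp
    | succ j IHj =>
      have hre : n + 1 + (j + 1) = (n + 1 + j) + 1 := by omega
      have hx : n + 1 + j = (n + j) + 1 := by omega
      have hy : n + (j + 1) = (n + j) + 1 := by omega
      have harith := arith_step (n + j) (by omega)
      have IHj' := IHj
      rw [hx] at IHj'
      rw [hre, Finset.sum_range_succ, if_pos (by omega), hy, hx, add_assoc]
      exact le_trans (add_le_add le_rfl harith) IHj'
  calc (∑ M ∈ Finset.range K, if n < M then ((M:ℕ):ℝ≥0∞)⁻¹ * ((M:ℕ):ℝ≥0∞)⁻¹ else 0)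
      ≤ ∑ M ∈ Finset.range (n + 1 + K), if n < M then ((M:ℕ):ℝ≥0∞)⁻¹ * ((M:ℕ):ℝ≥0∞)⁻¹ else 0 := by
        refine Finset.sum_le_sum_of_subset ?_
        exact Finset.range_subset_range.mpr (by omega)
    _ ≤ (∑ M ∈ Finset.range (n + 1 + K),
          if n < M then ((M:ℕ):ℝ≥0∞)⁻¹ * ((M:ℕ):ℝ≥0∞)⁻¹ else 0) + ((n + K : ℕ) : ℝ≥0∞)⁻¹ :=
        le_self_add
    _ ≤ ((n:ℕ):ℝ≥0∞)⁻¹ := SB K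

lemma key1 : (∑' M : ℕ, (if 0 < M then ((M:ℕ):ℝ≥0∞)⁻¹ * ((M:ℕ):ℝ≥0∞)⁻¹ else 0)) ≠ ∞ := by
  have hle : ∀ M : ℕ, (if 0 < M then ((M:ℕ):ℝ≥0∞)⁻¹ * ((M:ℕ):ℝ≥0∞)⁻¹ else 0)
      ≤ (if 1 < M then ((M:ℕ):ℝ≥0∞)⁻¹ * ((M:ℕ):ℝ≥0∞)⁻¹ else 0) + (if M = 1 then 1 else 0) := by
    intro M
    match M with
    | 0 => simp
    | 1 =>
      norm_num
    | (m + 2) =>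
      rw [if_pos (by omega), if_pos (by omega), if_neg (by omega), add_zero]
  refine ne_top_of_le_ne_top (show ((1:ℝ≥0∞)⁻¹ + 1) ≠ ⊤ by simp) ?_
  calc ∑' M : ℕ, (if 0 < M then ((M:ℕ):ℝ≥0∞)⁻¹ * ((M:ℕ):ℝ≥0∞)⁻¹ else 0)
      ≤ ∑' M : ℕ, ((if 1 < M then ((M:ℕ):ℝ≥0∞)⁻¹ * ((M:ℕ):ℝ≥0∞)⁻¹ else 0)
          + (if M = 1 then 1 else 0)) := ENNReal.tsum_le_tsum hle
    _ = (∑' M : ℕ, (if 1 < M then ((M:ℕ):ℝ≥0∞)⁻¹ * ((M:ℕ):ℝ≥0∞)⁻¹ else 0))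
          + ∑' M : ℕ, (if M = 1 then (1:ℝ≥0∞) else 0) := ENNReal.tsum_add
    _ ≤ ((1:ℕ):ℝ≥0∞)⁻¹ + 1 := by
        refine add_le_add (key2 1 le_rfl) ?_
        rw [tsum_eq_single 1 (fun M hM => by rw [if_neg hM])]
        simp
    _ = (1:ℝ≥0∞)⁻¹ + 1 := by norm_num

lemma inv_sum : ∀ r : List Bool, r.getLast? = some true →
    (∑' n : ℕ, Cr r n * ((n:ℕ):ℝ≥0∞)⁻¹) ≠ ∞ := by
  intro r
  induction r with
  | nil => intro hr; simp at hr
  | cons b r IH =>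
    intro hr
    match r, hr, IH with
    | [], hr, _ =>
      have hb : b = true := by simpa using hr
      subst hb
      have hterm : ∀ M : ℕ, Cr [true] M * ((M:ℕ):ℝ≥0∞)⁻¹
          = (if 0 < M then ((M:ℕ):ℝ≥0∞)⁻¹ * ((M:ℕ):ℝ≥0∞)⁻¹ else 0) := by
        intro M
        match M with
        | 0 =>
          rw [Cr_true]
          simp
        | (j + 1) =>
          rw [Cr_true, if_pos (by omega)]
          have : (∑ n ∈ Finset.range (j + 1), Cr [] n) = 1 := by
            simp_rw [Cr_nil]
            rw [Finset.sum_ite_eq' (Finset.range (j+1)) 0 (fun _ => (1:ℝ≥0∞))]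
            simp
          rw [this, one_mul]
      rw [tsum_congr hterm]
      exact key1
    | b' :: r'', hr, IH =>
      rw [List.getLast?_cons_cons] at hr
      have V2 := IH hr
      have c0 : Cr (b' :: r'') 0 = 0 := Cr_zero _ hr
      cases b
      · -- b = false
        refine ne_top_of_le_ne_top V2 (ENNReal.tsum_le_tsum fun n => ?_)
        match n with
        | 0 =>
          simp [Cr_false, c0]
        | (m + 1) =>
          rw [Cr_false, mul_assoc]
          refine mul_le_mul_right ?_ _
          calc ((m+1:ℕ):ℝ≥0∞)⁻¹ * ((m+1:ℕ):ℝ≥0∞)⁻¹ ≤ 1 * ((m+1:ℕ):ℝ≥0∞)⁻¹ := by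
                refine mul_le_mul_left ?_ _
                exact ENNReal.inv_le_one.mpr (by exact_mod_cast Nat.one_le_iff_ne_zero.mpr (by omega))
            _ = ((m+1:ℕ):ℝ≥0∞)⁻¹ := one_mul _
      · -- b = true
        have rearr : ∀ M : ℕ, Cr (true :: b' :: r'') M * ((M:ℕ):ℝ≥0∞)⁻¹
            = ∑' n : ℕ, Cr (b' :: r'') n
                * (if n < M then ((M:ℕ):ℝ≥0∞)⁻¹ * ((M:ℕ):ℝ≥0∞)⁻¹ else 0) := by
          intro M
          rw [Cr_true, range_sum_eq, mul_assoc, ← ENNReal.tsum_mul_right]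
          refine tsum_congr fun n => ?_
          by_cases hn : n < M
          · rw [if_pos hn, if_pos hn]
          · rw [if_neg hn, if_neg hn, zero_mul, mul_zero]
        refine ne_top_of_le_ne_top V2 ?_
        calc ∑' M : ℕ, Cr (true :: b' :: r'') M * ((M:ℕ):ℝ≥0∞)⁻¹
            = ∑' M : ℕ, ∑' n : ℕ, Cr (b' :: r'') n
                * (if n < M then ((M:ℕ):ℝ≥0∞)⁻¹ * ((M:ℕ):ℝ≥0∞)⁻¹ else 0) := tsum_congr rearr
          _ = ∑' n : ℕ, ∑' M : ℕ, Cr (b' :: r'') n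
                * (if n < M then ((M:ℕ):ℝ≥0∞)⁻¹ * ((M:ℕ):ℝ≥0∞)⁻¹ else 0) := ENNReal.tsum_comm
          _ = ∑' n : ℕ, Cr (b' :: r'') n
                * ∑' M : ℕ, (if n < M then ((M:ℕ):ℝ≥0∞)⁻¹ * ((M:ℕ):ℝ≥0∞)⁻¹ else 0) :=
              tsum_congr fun n => ENNReal.tsum_mul_left
          _ ≤ ∑' n : ℕ, Cr (b' :: r'') n * ((n:ℕ):ℝ≥0∞)⁻¹ := by
              refine ENNReal.tsum_le_tsum fun n => ?_
              match n with
              | 0 =>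
                rw [c0, zero_mul, zero_mul]
              | (m + 1) =>
                exact mul_le_mul_right (key2 (m + 1) (by omega)) _

lemma A_one_eq (r : List Bool) (hadm : r = [] ∨ r.getLast? = some true) :
    A r 1 = ∑' n : ℕ, Cr r n := by
  rw [series r hadm 1 zero_le_one le_rfl]
  refine tsum_congr fun n => ?_
  rw [ENNReal.ofReal_one, one_pow, mul_one]

lemma A_one_ne_top (r₂ : List Bool) (h2 : r₂.getLast? = some true) :
    A (false :: r₂) 1 ≠ ∞ := by
  have hadm : (false :: r₂).getLast? = some true := by
    match r₂, h2 with
    | b' :: r'', h2 => rw [List.getLast?_cons_cons]; exact h2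
  rw [A_one_eq _ (Or.inr hadm)]
  have : ∀ n : ℕ, Cr (false :: r₂) n = Cr r₂ n * ((n:ℕ):ℝ≥0∞)⁻¹ := fun n => Cr_false _ _
  rw [tsum_congr this]
  exact inv_sum r₂ h2


variable {α : Type*}

lemma shuffles_nil_left (v : List α) : shuffles [] v = {v} := by
  cases v <;> simp [shuffles]

lemma shuffles_nil_right (u : List α) : shuffles u [] = {u} := by
  cases u <;> simp [shuffles]

lemma shuffles_cons_cons (a b : α) (u v : List α) :
    shuffles (a :: u) (b :: v)
      = (shuffles u (b :: v)).map (a :: ·) + (shuffles (a :: u) v).map (b :: ·) := by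
  rw [shuffles]

lemma comm_fun (c y : α) : ((fun x => c :: x) ∘ (fun x => x ++ [y])) =
    ((fun x => x ++ [y]) ∘ (fun x => c :: x)) := by
  funext x; simp

lemma shuffles_snoc_left : ∀ (v : List α) (a b : α),
    shuffles [a] (v ++ [b]) = {(v ++ [b]) ++ [a]} + (shuffles [a] v).map (· ++ [b]) := by
  intro v
  induction v with
  | nil =>
    intro a b
    rw [List.nil_append, shuffles_cons_cons, shuffles_nil_left, shuffles_nil_right]
    simp only [Multiset.map_singleton, List.nil_append, List.singleton_append]
    exact add_comm _ _
  | cons c v' IH =>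
    intro a b
    rw [List.cons_append, shuffles_cons_cons, shuffles_nil_left, IH a b,
      shuffles_cons_cons, shuffles_nil_left]
    simp only [Multiset.map_add, Multiset.map_map, Multiset.map_singleton]
    rw [comm_fun]
    simp only [List.cons_append, List.append_assoc, List.singleton_append, List.nil_append]
    abel

lemma shuffles_snoc_right : ∀ (u : List α) (a b : α),
    shuffles (u ++ [a]) [b] = (shuffles u [b]).map (· ++ [a]) + {(u ++ [a]) ++ [b]} := by
  intro u
  induction u with
  | nil =>
    intro a b
    rw [List.nil_append, shuffles_cons_cons, shuffles_nil_left, shuffles_nil_right]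
    simp only [Multiset.map_singleton, List.nil_append, List.singleton_append]
    exact add_comm _ _
  | cons c u' IH =>
    intro a b
    rw [List.cons_append, shuffles_cons_cons, shuffles_nil_right, IH a b,
      shuffles_cons_cons, shuffles_nil_right]
    simp only [Multiset.map_add, Multiset.map_map, Multiset.map_singleton]
    rw [comm_fun]
    simp only [List.cons_append, List.append_assoc, List.singleton_append, List.nil_append]
    abel

lemma shuffles_snoc : ∀ (u v : List α) (a b : α),
    shuffles (u ++ [a]) (v ++ [b]) =
      (shuffles u (v ++ [b])).map (· ++ [a]) + (shuffles (u ++ [a]) v).map (· ++ [b]) := by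
  have main : ∀ (n : ℕ) (u v : List α), u.length + v.length ≤ n → ∀ (a b : α),
      shuffles (u ++ [a]) (v ++ [b]) =
        (shuffles u (v ++ [b])).map (· ++ [a]) + (shuffles (u ++ [a]) v).map (· ++ [b]) := by
    intro n
    induction n with
    | zero =>
      intro u v hn a b
      have hu : u = [] := List.length_eq_zero_iff.mp (by omega)
      have hv : v = [] := List.length_eq_zero_iff.mp (by omega)
      subst hu; subst hv
      simp only [List.nil_append]
      rw [shuffles_cons_cons, shuffles_nil_left, shuffles_nil_right]
      simp only [Multiset.map_singleton, List.singleton_append, List.nil_append]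
      exact add_comm _ _
    | succ n IH =>
      intro u v hn a b
      match u, v with
      | [], v =>
        rw [List.nil_append, shuffles_snoc_left, shuffles_nil_left]
        simp [add_comm]
      | c :: u', [] =>
        rw [List.nil_append, shuffles_snoc_right (c :: u') a b, shuffles_nil_right]
        simp
      | c :: u', d :: v' =>
        have IH1 := IH u' (d :: v') (by simp at hn ⊢; omega) a b
        have IH2 := IH (c :: u') v' (by simp at hn ⊢; omega) a b
        calc shuffles ((c :: u') ++ [a]) ((d :: v') ++ [b])
            = (shuffles (u' ++ [a]) ((d :: v') ++ [b])).map (c :: ·)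
              + (shuffles ((c :: u') ++ [a]) (v' ++ [b])).map (d :: ·) := by
              rw [List.cons_append, List.cons_append (a := d), shuffles_cons_cons]
          _ = ((shuffles u' ((d :: v') ++ [b])).map (· ++ [a])
                + (shuffles (u' ++ [a]) (d :: v')).map (· ++ [b])).map (c :: ·)
              + ((shuffles (c :: u') (v' ++ [b])).map (· ++ [a])
                + (shuffles ((c :: u') ++ [a]) v').map (· ++ [b])).map (d :: ·) := by
              rw [IH1, IH2]
          _ = (shuffles (c :: u') ((d :: v') ++ [b])).map (· ++ [a])
              + (shuffles ((c :: u') ++ [a]) (d :: v')).map (· ++ [b]) := by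
              rw [show (d :: v') ++ [b] = d :: (v' ++ [b]) from rfl,
                shuffles_cons_cons c d u' (v' ++ [b]),
                show (c :: u') ++ [a] = c :: (u' ++ [a]) from rfl,
                shuffles_cons_cons c d (u' ++ [a]) v']
              simp only [Multiset.map_add, Multiset.map_map]
              rw [comm_fun, comm_fun]
              have swap : ∀ (x y : Multiset (List α)) (z w : Multiset (List α)),
                  x + y + (z + w) = x + z + (y + w) := by
                intro x y z w
                abel
              rw [swap]
              rw [comm_fun d a, comm_fun d b]
  intro u v a b
  exact main (u.length + v.length) u v le_rfl a b

lemma shuffles_reverse : ∀ (u v : List α),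
    shuffles u.reverse v.reverse = (shuffles u v).map List.reverse := by
  have main : ∀ (n : ℕ) (u v : List α), u.length + v.length ≤ n →
      shuffles u.reverse v.reverse = (shuffles u v).map List.reverse := by
    intro n
    induction n with
    | zero =>
      intro u v hn
      have hu : u = [] := List.length_eq_zero_iff.mp (by omega)
      have hv : v = [] := List.length_eq_zero_iff.mp (by omega)
      subst hu; subst hv
      simp [shuffles_nil_left]
    | succ n IH =>
      intro u v hn
      match u, v with
      | [], v => simp [shuffles_nil_left]
      | c :: u', [] => simp [shuffles_nil_left, shuffles_nil_right]
      | c :: u', d :: v' =>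
        rw [List.reverse_cons, List.reverse_cons, shuffles_snoc,
          ← List.reverse_cons (a := d) (as := v'), ← List.reverse_cons (a := c) (as := u'),
          IH u' (d :: v') (by simp at hn ⊢; omega),
          IH (c :: u') v' (by simp at hn ⊢; omega),
          shuffles_cons_cons]
        simp only [Multiset.map_add, Multiset.map_map]
        congr 1 <;> (refine Multiset.map_congr rfl fun w _ => ?_; simp)
  intro u v
  exact main (u.length + v.length) u v le_rfl

lemma shuffles_length : ∀ (u v w : List α), w ∈ shuffles u v → w.length = u.length + v.length := by
  have main : ∀ (n : ℕ) (u v : List α), u.length + v.length ≤ n → ∀ w ∈ shuffles u v,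
      w.length = u.length + v.length := by
    intro n
    induction n with
    | zero =>
      intro u v hn w hw
      have hu : u = [] := List.length_eq_zero_iff.mp (by omega)
      have hv : v = [] := List.length_eq_zero_iff.mp (by omega)
      subst hu; subst hv
      rw [shuffles_nil_left] at hw
      simp at hw
      subst hw; rfl
    | succ n IH =>
      intro u v hn w hw
      match u, v with
      | [], v =>
        rw [shuffles_nil_left] at hw
        simp at hw
        subst hw; simp
      | c :: u', [] =>
        rw [shuffles_nil_right] at hw
        simp at hw
        subst hw; simp
      | c :: u', d :: v' =>
        rw [shuffles_cons_cons] at hw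
        rw [Multiset.mem_add] at hw
        rcases hw with hw | hw
        · rcases Multiset.mem_map.mp hw with ⟨w', hw', rfl⟩
          have := IH u' (d :: v') (by simp at hn ⊢; omega) w' hw'
          simp at this ⊢
          omega
        · rcases Multiset.mem_map.mp hw with ⟨w', hw', rfl⟩
          have := IH (c :: u') v' (by simp at hn ⊢; omega) w' hw'
          simp at this ⊢
          omega
  intro u v w hw
  exact main (u.length + v.length) u v le_rfl w hw

lemma shuffles_head : ∀ (u v w : List α), w ∈ shuffles u v →
    w.head? = u.head? ∨ w.head? = v.head? := by
  intro u v w hw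
  match u, v with
  | [], v =>
    rw [shuffles_nil_left] at hw
    simp at hw; subst hw; exact Or.inr rfl
  | c :: u', [] =>
    rw [shuffles_nil_right] at hw
    simp at hw; subst hw; exact Or.inl rfl
  | c :: u', d :: v' =>
    rw [shuffles_cons_cons, Multiset.mem_add] at hw
    rcases hw with hw | hw
    · rcases Multiset.mem_map.mp hw with ⟨w', _, rfl⟩
      exact Or.inl rfl
    · rcases Multiset.mem_map.mp hw with ⟨w', _, rfl⟩
      exact Or.inr rfl

lemma shuffles_getLast : ∀ (u v w : List α), w ∈ shuffles u v →
    w.getLast? = u.getLast? ∨ w.getLast? = v.getLast? := by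
  intro u v
  rw [show u = u.reverse.reverse from (List.reverse_reverse u).symm,
    show v = v.reverse.reverse from (List.reverse_reverse v).symm] 
  generalize u.reverse = ur
  generalize v.reverse = vr
  intro w hw
  rw [shuffles_reverse] at hw
  rcases Multiset.mem_map.mp hw with ⟨w', hw', rfl⟩
  have := shuffles_head _ _ _ hw'
  rw [List.getLast?_reverse, List.getLast?_reverse, List.getLast?_reverse]
  exact this


lemma word_nil : word [] = [] := rfl

lemma word_cons (a : ℕ) (k : List ℕ) :
    word (a :: k) = word k ++ (true :: List.replicate (a - 1) false) := by
  simp [word, List.reverse_cons, List.map_append, List.flatten_append]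

lemma word_cons_reverse (a : ℕ) (k : List ℕ) :
    (word (a :: k)).reverse
      = (List.replicate (a - 1) false ++ [true]) ++ (word k).reverse := by
  rw [word_cons, List.reverse_append, List.reverse_cons, List.reverse_replicate,
    List.append_assoc]

noncomputable def CrOps : List Bool → (ℕ → ℝ≥0∞) → ℕ → ℝ≥0∞
  | [], c => c
  | true :: r, c => fun M => (∑ n ∈ Finset.range M, CrOps r c n) * (M : ℝ≥0∞)⁻¹
  | false :: r, c => fun n => CrOps r c n * (n : ℝ≥0∞)⁻¹

lemma Cr_eq_CrOps : ∀ r : List Bool, Cr r = CrOps r (Cr []) := by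
  intro r
  induction r with
  | nil => rfl
  | cons b r IH =>
    cases b <;> (funext n; simp only [Cr, CrOps, IH])

lemma CrOps_append : ∀ (r s : List Bool) (c : ℕ → ℝ≥0∞),
    CrOps (r ++ s) c = CrOps r (CrOps s c) := by
  intro r
  induction r with
  | nil => intro s c; rfl
  | cons b r IH =>
    intro s c
    cases b <;> (funext n; simp [CrOps, IH])

lemma Cr_append (r s : List Bool) : Cr (r ++ s) = CrOps r (Cr s) := by
  rw [Cr_eq_CrOps, CrOps_append, ← Cr_eq_CrOps]

lemma CrOps_rep : ∀ (j : ℕ) (c : ℕ → ℝ≥0∞),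
    CrOps (List.replicate j false ++ [true]) c
      = fun M => (∑ n ∈ Finset.range M, c n) * ((M : ℝ≥0∞)⁻¹) ^ (j + 1) := by
  intro j
  induction j with
  | zero =>
    intro c
    funext M
    simp [CrOps]
  | succ j IH =>
    intro c
    rw [List.replicate_succ, List.cons_append]
    funext M
    show CrOps (false :: _) c M = _
    simp only [CrOps]
    rw [congrFun (IH c) M]
    ring

lemma Cr_word (a : ℕ) (ha : 1 ≤ a) (k : List ℕ) (M : ℕ) :
    Cr ((word (a :: k)).reverse) M
      = (∑ n ∈ Finset.range M, Cr ((word k).reverse) n) * ((M : ℝ≥0∞)⁻¹) ^ a := by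
  rw [word_cons_reverse, Cr_append, CrOps_rep]
  have h1 : a - 1 + 1 = a := by omega
  rw [h1]

/-- Fin-indexed fold. -/
noncomputable def BfoldF : (p : ℕ) → (Fin p → ℕ) → ℕ → ℝ≥0∞
  | 0, _ => Cr []
  | p + 1, e => fun M =>
      (∑ n ∈ Finset.range M, BfoldF p (fun j => e j.succ) n) * ((M : ℝ≥0∞)⁻¹) ^ (e 0)

lemma Cr_word_BfoldF : ∀ (k : List ℕ), (∀ x ∈ k, 1 ≤ x) →
    Cr ((word k).reverse) = BfoldF k.length k.get := by
  intro k
  induction k with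
  | nil => intro _; rfl
  | cons a k' IH =>
    intro hk
    funext M
    rw [Cr_word a (hk a (by simp)) k' M]
    show _ = (∑ n ∈ Finset.range M,
        BfoldF k'.length (fun j : Fin k'.length => (a :: k').get j.succ) n)
          * ((M : ℝ≥0∞)⁻¹) ^ ((a :: k').get (0 : Fin (k'.length + 1)))
    rw [IH (fun x hx => hk x (by simp [hx]))]
    rfl

lemma strictAnti_cons_iff {p : ℕ} (M : ℕ) (f : Fin p → ℕ) :
    StrictAnti (Fin.cons M f : Fin (p + 1) → ℕ) ↔ StrictAnti f ∧ ∀ j, f j < M := by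
  constructor
  · intro hsa
    constructor
    · intro i j hij
      have := hsa (show (i.succ : Fin (p + 1)) < j.succ from Fin.succ_lt_succ_iff.mpr hij)
      simpa using this
    · intro j
      have := hsa (show (0 : Fin (p + 1)) < j.succ from Fin.succ_pos j)
      simpa using this
  · rintro ⟨hf, hb⟩ i j hij
    rcases Fin.eq_zero_or_eq_succ j with rfl | ⟨j', rfl⟩
    · exact absurd hij (by simp)
    · rcases Fin.eq_zero_or_eq_succ i with rfl | ⟨i', rfl⟩
      · simpa using hb j'
      · have h2 : i' < j' := by rwa [Fin.succ_lt_succ_iff] at hij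
        simpa using hf h2

lemma pos_cons_iff {p : ℕ} (M : ℕ) (f : Fin p → ℕ) :
    (∀ i, 0 < (Fin.cons M f : Fin (p + 1) → ℕ) i) ↔ 0 < M ∧ ∀ j, 0 < f j := by
  rw [Fin.forall_fin_succ]
  simp

lemma delta_sum (M : ℕ) : (∑ n ∈ Finset.range M, Cr [] n) = if 0 < M then 1 else 0 := by
  match M with
  | 0 => simp
  | (j + 1) =>
    rw [if_pos (by omega)]
    simp_rw [Cr_nil]
    rw [Finset.sum_ite_eq' (Finset.range (j + 1)) 0 (fun _ => (1 : ℝ≥0∞))]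
    simp

lemma Zsum : ∀ (p : ℕ) (e : Fin (p + 1) → ℕ) (wt : ℕ → ℝ≥0∞),
    ∑' M : ℕ, BfoldF (p + 1) e M * wt M
      = ∑' f : Fin (p + 1) → ℕ,
          (if StrictAnti f ∧ (∀ i, 0 < f i)
            then (∏ i, ((f i : ℕ) : ℝ≥0∞)⁻¹ ^ (e i)) * wt (f 0) else 0) := by
  intro p
  induction p with
  | zero =>
    intro e wt
    have lhs : ∀ M : ℕ, BfoldF 1 e M * wt M
        = if 0 < M then ((M : ℝ≥0∞)⁻¹) ^ (e 0) * wt M else 0 := by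
      intro M
      show (∑ n ∈ Finset.range M, Cr [] n) * ((M : ℝ≥0∞)⁻¹) ^ (e 0) * wt M = _
      rw [delta_sum M]
      by_cases hM : 0 < M
      · rw [if_pos hM, if_pos hM, one_mul]
      · rw [if_neg hM, if_neg hM, zero_mul, zero_mul]
    rw [tsum_congr lhs, ← Equiv.tsum_eq (Equiv.funUnique (Fin 1) ℕ).symm]
    refine tsum_congr fun M => ?_
    have hev : ((Equiv.funUnique (Fin 1) ℕ).symm M) = fun _ : Fin 1 => M := rfl
    rw [hev]
    have hsa : StrictAnti (fun _ : Fin 1 => M) := by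
      intro i j hij
      exact absurd hij (by rw [Subsingleton.elim i j]; exact lt_irrefl j)
    have hpos : (∀ i : Fin 1, 0 < (fun _ : Fin 1 => M) i) ↔ 0 < M := by simp
    by_cases hM : 0 < M
    · rw [if_pos hM, if_pos ⟨hsa, hpos.mpr hM⟩]
      congr 1
      rw [Fin.prod_univ_one]
    · rw [if_neg hM, if_neg (by rintro ⟨_, hp⟩; exact hM (hpos.mp hp))]
  | succ p IH =>
    intro e wt
    set C2 : ℕ → ℝ≥0∞ := BfoldF (p + 1) (fun j => e j.succ) with hC2
    set W : ℕ → ℝ≥0∞ :=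
      fun n => ∑' M : ℕ, (if n < M then ((M : ℝ≥0∞)⁻¹) ^ (e 0) * wt M else 0) with hW
    have lhs1 : ∑' M : ℕ, BfoldF (p + 2) e M * wt M = ∑' n : ℕ, C2 n * W n := by
      calc ∑' M : ℕ, BfoldF (p + 2) e M * wt M
          = ∑' M : ℕ, ∑' n : ℕ, (if n < M then C2 n else 0)
              * (((M : ℝ≥0∞)⁻¹) ^ (e 0) * wt M) := by
            refine tsum_congr fun M => ?_
            show (∑ n ∈ Finset.range M, C2 n) * ((M : ℝ≥0∞)⁻¹) ^ (e 0) * wt M = _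
            rw [range_sum_eq, mul_assoc, ← ENNReal.tsum_mul_right]
        _ = ∑' n : ℕ, ∑' M : ℕ, (if n < M then C2 n else 0)
              * (((M : ℝ≥0∞)⁻¹) ^ (e 0) * wt M) := ENNReal.tsum_comm
        _ = ∑' n : ℕ, C2 n * W n := by
            refine tsum_congr fun n => ?_
            rw [hW, ← ENNReal.tsum_mul_left]
            refine tsum_congr fun M => ?_
            by_cases hnM : n < M
            · rw [if_pos hnM, if_pos hnM]
            · rw [if_neg hnM, if_neg hnM, zero_mul, mul_zero]
    rw [lhs1, IH (fun j => e j.succ) W, eq_comm,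
      ← Equiv.tsum_eq (Fin.consEquiv (fun _ : Fin (p + 2) => ℕ)), ENNReal.tsum_prod',
      ENNReal.tsum_comm]
    refine tsum_congr fun f => ?_
    have key : ∀ M : ℕ,
        (if StrictAnti (Fin.cons M f : Fin (p + 2) → ℕ)
              ∧ (∀ i, 0 < (Fin.cons M f : Fin (p + 2) → ℕ) i)
          then (∏ i, (((Fin.cons M f : Fin (p + 2) → ℕ) i : ℕ) : ℝ≥0∞)⁻¹ ^ (e i))
              * wt ((Fin.cons M f : Fin (p + 2) → ℕ) 0) else 0)
        = if StrictAnti f ∧ (∀ i, 0 < f i) then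
            (if f 0 < M then
              (∏ i, ((f i : ℕ) : ℝ≥0∞)⁻¹ ^ (e i.succ))
                * (((M : ℝ≥0∞)⁻¹) ^ (e 0) * wt M) else 0) else 0 := by
      intro M
      have hprod : (∏ i, (((Fin.cons M f : Fin (p + 2) → ℕ) i : ℕ) : ℝ≥0∞)⁻¹ ^ (e i))
          = ((M : ℝ≥0∞)⁻¹) ^ (e 0) * ∏ i, ((f i : ℕ) : ℝ≥0∞)⁻¹ ^ (e i.succ) := by
        rw [Fin.prod_univ_succ]
        simp [Fin.cons_zero, Fin.cons_succ]
      by_cases hc : StrictAnti f ∧ (∀ i, 0 < f i)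
      · rw [if_pos hc]
        by_cases hfM : f 0 < M
        · have hcond : StrictAnti (Fin.cons M f : Fin (p + 2) → ℕ)
              ∧ (∀ i, 0 < (Fin.cons M f : Fin (p + 2) → ℕ) i) := by
            constructor
            · rw [strictAnti_cons_iff]
              exact ⟨hc.1, fun j => lt_of_le_of_lt (hc.1.antitone (Fin.zero_le j)) hfM⟩
            · rw [pos_cons_iff]
              exact ⟨lt_trans (hc.2 0) hfM, hc.2⟩
          rw [if_pos hcond, if_pos hfM, hprod, Fin.cons_zero]
          try ring
        · rw [if_neg hfM, if_neg (by
            rintro ⟨hsa, _⟩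
            rw [strictAnti_cons_iff] at hsa
            exact hfM (hsa.2 0))]
      · rw [if_neg hc, if_neg (by
          rintro ⟨hsa, hpos⟩
          rw [strictAnti_cons_iff] at hsa
          rw [pos_cons_iff] at hpos
          exact hc ⟨hsa.1, hpos.2⟩)]
    calc ∑' M : ℕ, (if StrictAnti ((Fin.consEquiv fun _ : Fin (p + 2) => ℕ) (M, f))
            ∧ (∀ i, 0 < ((Fin.consEquiv fun _ : Fin (p + 2) => ℕ) (M, f)) i)
          then (∏ i, ((((Fin.consEquiv fun _ : Fin (p + 2) => ℕ) (M, f)) i : ℕ) : ℝ≥0∞)⁻¹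
                ^ (e i))
              * wt (((Fin.consEquiv fun _ : Fin (p + 2) => ℕ) (M, f)) 0) else 0)
        = ∑' M : ℕ, (if StrictAnti f ∧ (∀ i, 0 < f i) then
            (if f 0 < M then
              (∏ i, ((f i : ℕ) : ℝ≥0∞)⁻¹ ^ (e i.succ))
                * (((M : ℝ≥0∞)⁻¹) ^ (e 0) * wt M) else 0) else 0) := by
          refine tsum_congr fun M => ?_
          exact key M
      _ = if StrictAnti f ∧ (∀ i, 0 < f i)
          then (∏ i, ((f i : ℕ) : ℝ≥0∞)⁻¹ ^ (e i.succ)) * W (f 0) else 0 := by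
          by_cases hc : StrictAnti f ∧ (∀ i, 0 < f i)
          · simp only [if_pos hc]
            rw [hW, ← ENNReal.tsum_mul_left]
            refine tsum_congr fun M => ?_
            by_cases hfM : f 0 < M
            · rw [if_pos hfM, if_pos hfM]
            · rw [if_neg hfM, if_neg hfM, mul_zero]
          · simp only [if_neg hc, tsum_zero]


-- GLUE

lemma lintegral_simplex (w : List Bool) :
    ∫⁻ t in simplex w.length, ∏ i, eh (w.get i) (t i) = A w.reverse 1 := by
  have hreg : simplex w.length = region w.length 1 := rfl
  rw [hreg, peel w.length w.get 1, List.ofFn_get]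

lemma h_nonneg (b : Bool) {t : ℝ} (ht : t ∈ Set.Ioo (0:ℝ) 1) : 0 ≤ h b t := by
  cases b
  · show (0:ℝ) ≤ 1 / t
    exact le_of_lt (by rw [one_div]; exact inv_pos.mpr ht.1)
  · show (0:ℝ) ≤ 1 / (1 - t)
    exact le_of_lt (by rw [one_div]; exact inv_pos.mpr (by linarith [ht.2]))

lemma simplexIntegral_eq (w : List Bool) :
    simplexIntegral w = (A w.reverse 1).toReal := by
  have hmeas : MeasurableSet (simplex w.length) := measurableSet_region w.length 1
  rw [simplexIntegral]
  rw [integral_eq_lintegral_of_nonneg_ae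
    (by
      filter_upwards [ae_restrict_mem hmeas] with t ht
      exact Finset.prod_nonneg fun i _ => h_nonneg _ (ht.2 i))
    (by
      refine Measurable.aestronglyMeasurable ?_
      exact Finset.measurable_prod _ fun i _ =>
        (measurable_h _).comp (measurable_pi_apply i))]
  congr 1
  rw [← lintegral_simplex w]
  refine setLIntegral_congr_fun hmeas (fun t ht => ?_)
  rw [ENNReal.ofReal_prod_of_nonneg fun i _ => h_nonneg _ (ht.2 i)]
  rfl

lemma word_head : ∀ (k : List ℕ), k ≠ [] → (word k).head? = some true := by
  intro k
  induction k with
  | nil => intro hcon; exact absurd rfl hcon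
  | cons a k' IH =>
    intro _
    rw [word_cons]
    rcases eq_or_ne k' [] with rfl | hne
    · rw [word_nil]; rfl
    · have hwne : word k' ≠ [] := by
        intro hcon
        have := IH hne
        rw [hcon] at this
        simp at this
      rw [List.head?_append_of_ne_nil _ hwne]
      exact IH hne

lemma word_getLast (a : ℕ) (ha : 2 ≤ a) (k' : List ℕ) :
    (word (a :: k')).getLast? = some false := by
  rw [word_cons, List.getLast?_append_of_ne_nil _ (by simp)]
  obtain ⟨j, hj⟩ : ∃ j, a - 1 = j + 1 := ⟨a - 2, by omega⟩
  rw [hj, List.replicate_succ', ← List.cons_append, List.getLast?_concat]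

lemma shuffle_A_ne_top {u v w : List Bool} (hu1 : u.head? = some true)
    (hv1 : v.head? = some true) (hu2 : u.getLast? = some false)
    (hv2 : v.getLast? = some false) (hw : w ∈ shuffles u v) : A w.reverse 1 ≠ ∞ := by
  have hh : w.head? = some true := by
    rcases shuffles_head u v w hw with h | h <;> rw [h] <;> assumption
  have hl : w.getLast? = some false := by
    rcases shuffles_getLast u v w hw with h | h <;> rw [h] <;> assumption
  rcases hrev : w.reverse with _ | ⟨b, r₂⟩
  · have hwnil : w = [] := by rwa [List.reverse_eq_nil_iff] at hrev
    rw [hwnil] at hh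
    simp at hh
  · have hb : b = false := by
      have hx : w.reverse.head? = some false := by rw [List.head?_reverse]; exact hl
      rw [hrev] at hx
      simpa using hx
    subst hb
    have hr2 : r₂.getLast? = some true := by
      have hx : w.reverse.getLast? = some true := by rw [List.getLast?_reverse]; exact hh
      rw [hrev] at hx
      match r₂, hx with
      | [], hx => simp at hx
      | c :: r₃, hx => rwa [List.getLast?_cons_cons] at hx
    exact A_one_ne_top r₂ hr2

lemma multiset_sum_ne_top (s : Multiset ℝ≥0∞) (hs : ∀ x ∈ s, x ≠ ∞) : s.sum ≠ ∞ := by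
  induction s using Multiset.induction with
  | empty => simp
  | cons a s ih =>
    rw [Multiset.sum_cons]
    exact ENNReal.add_ne_top.mpr ⟨hs a (by simp), ih fun x hx => hs x (by simp [hx])⟩

lemma multiset_toReal_sum (s : Multiset ℝ≥0∞) (hs : ∀ x ∈ s, x ≠ ∞) :
    s.sum.toReal = (s.map ENNReal.toReal).sum := by
  induction s using Multiset.induction with
  | empty => simp
  | cons a s ih =>
    rw [Multiset.sum_cons, Multiset.map_cons, Multiset.sum_cons,
      ENNReal.toReal_add (hs a (by simp))
        (multiset_sum_ne_top s fun x hx => hs x (by simp [hx])),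
      ih fun x hx => hs x (by simp [hx])]

lemma zeta_eq_A (a : ℕ) (k' : List ℕ) (hk : ∀ x ∈ (a :: k'), 0 < x) :
    zeta (a :: k') = (A ((word (a :: k')).reverse) 1).toReal := by
  have hadm : ((word (a :: k')).reverse) = [] ∨ ((word (a :: k')).reverse).getLast? = some true :=
    Or.inr (by rw [List.getLast?_reverse]; exact word_head _ (by simp))
  have hkpos : ∀ x ∈ (a :: k'), 1 ≤ x := fun x hx => hk x hx
  have step1 : A ((word (a :: k')).reverse) 1
      = ∑' f : Fin (k'.length + 1) → ℕ,
          (if StrictAnti f ∧ (∀ i, 0 < f i)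
            then (∏ i, ((f i : ℕ) : ℝ≥0∞)⁻¹ ^ ((a :: k').get i)) else 0) := by
    rw [A_one_eq _ hadm, Cr_word_BfoldF _ hkpos]
    calc ∑' M : ℕ, BfoldF (a :: k').length ((a :: k').get) M
        = ∑' M : ℕ, BfoldF (k'.length + 1) ((a :: k').get) M * (fun _ : ℕ => (1:ℝ≥0∞)) M :=
          tsum_congr fun M => (mul_one _).symm
      _ = ∑' f : Fin (k'.length + 1) → ℕ,
            (if StrictAnti f ∧ (∀ i, 0 < f i)
              then (∏ i, ((f i : ℕ) : ℝ≥0∞)⁻¹ ^ ((a :: k').get i))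
                * (fun _ : ℕ => (1:ℝ≥0∞)) (f 0) else 0) :=
          Zsum k'.length ((a :: k').get) (fun _ => 1)
      _ = ∑' f : Fin (k'.length + 1) → ℕ,
            (if StrictAnti f ∧ (∀ i, 0 < f i)
              then (∏ i, ((f i : ℕ) : ℝ≥0∞)⁻¹ ^ ((a :: k').get i)) else 0) := by
          refine tsum_congr fun f => ?_
          by_cases hc : StrictAnti f ∧ (∀ i, 0 < f i)
          · rw [if_pos hc, if_pos hc]
            exact mul_one _
          · rw [if_neg hc, if_neg hc]
  have step2 : (∑' f : Fin (k'.length + 1) → ℕ,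
        (if StrictAnti f ∧ (∀ i, 0 < f i)
          then (∏ i, ((f i : ℕ) : ℝ≥0∞)⁻¹ ^ ((a :: k').get i)) else 0))
      = ∑' x : {f : Fin ((a :: k').length) → ℕ // StrictAnti f ∧ ∀ i, 0 < f i},
          ∏ i, ((x.1 i : ℕ) : ℝ≥0∞)⁻¹ ^ ((a :: k').get i) := by
    rw [eq_comm]
    refine Eq.trans (tsum_subtype
      ({f : Fin ((a :: k').length) → ℕ | StrictAnti f ∧ ∀ i, 0 < f i})
      (fun f => ∏ i, ((f i : ℕ) : ℝ≥0∞)⁻¹ ^ ((a :: k').get i))) ?_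
    refine tsum_congr fun f => ?_
    rw [Set.indicator_apply]
    exact if_congr Iff.rfl rfl rfl
  rw [step1, step2]
  have hterm : ∀ x : {f : Fin ((a :: k').length) → ℕ // StrictAnti f ∧ ∀ i, 0 < f i},
      (∏ i, ((x.1 i : ℕ) : ℝ≥0∞)⁻¹ ^ ((a :: k').get i)) ≠ ∞ := by
    intro x
    refine ne_of_lt (ENNReal.prod_lt_top fun i _ => ?_)
    refine ENNReal.pow_lt_top ?_
    rw [ENNReal.inv_lt_top]
    exact_mod_cast x.2.2 i
  rw [ENNReal.tsum_toReal_eq hterm, zeta]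
  refine tsum_congr fun x => ?_
  rw [ENNReal.toReal_prod]
  refine Finset.prod_congr rfl fun i _ => ?_
  rw [ENNReal.toReal_pow, ENNReal.toReal_inv, ENNReal.toReal_natCast, inv_pow, one_div]

theorem shuffle_relation (k l : List ℕ)
    (hk : ∀ a ∈ k, 0 < a) (hl : ∀ a ∈ l, 0 < a)
    (hk1 : 2 ≤ k.headI) (hl1 : 2 ≤ l.headI) :
    simplexIntegral (word k) * simplexIntegral (word l)
        = ((shuffles (word k) (word l)).map simplexIntegral).sum ∧
      zeta k * zeta l
        = ((shuffles (word k) (word l)).map simplexIntegral).sum := by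
  obtain ⟨a, k', rfl⟩ : ∃ a k', k = a :: k' := by
    cases k with
    | nil => simp [List.headI] at hk1
    | cons a k' => exact ⟨a, k', rfl⟩
  obtain ⟨b, l', rfl⟩ : ∃ b l', l = b :: l' := by
    cases l with
    | nil => simp [List.headI] at hl1
    | cons b l' => exact ⟨b, l', rfl⟩
  have ha2 : 2 ≤ a := by simpa [List.headI] using hk1
  have hb2 : 2 ≤ b := by simpa [List.headI] using hl1
  set u := word (a :: k') with hu
  set v := word (b :: l') with hv
  have hu1 : u.head? = some true := word_head _ (by simp)
  have hv1 : v.head? = some true := word_head _ (by simp)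
  have hu2 : u.getLast? = some false := word_getLast a ha2 k'
  have hv2 : v.getLast? = some false := word_getLast b hb2 l'
  have hfin : ∀ w ∈ shuffles u v, A w.reverse 1 ≠ ∞ :=
    fun w hw => shuffle_A_ne_top hu1 hv1 hu2 hv2 hw
  have key : simplexIntegral u * simplexIntegral v
      = ((shuffles u v).map simplexIntegral).sum := by
    rw [simplexIntegral_eq u, simplexIntegral_eq v, ← ENNReal.toReal_mul,
      shuf u.reverse v.reverse 1, shuffles_reverse u v, Multiset.map_map]
    rw [multiset_toReal_sum _ (by
      intro x hx
      rcases Multiset.mem_map.mp hx with ⟨w, hw, rfl⟩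
      exact hfin w hw)]
    rw [Multiset.map_map]
    refine congrArg Multiset.sum (Multiset.map_congr rfl fun w hw => ?_)
    exact (simplexIntegral_eq w).symm
  refine ⟨key, ?_⟩
  rw [zeta_eq_A a k' hk, zeta_eq_A b l' hl, ← simplexIntegral_eq u, ← simplexIntegral_eq v]
  exact key
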